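/- Let s be a natural number and let C be a finite set of cells of the integer grid having maximum cardinality among all finite sets of cells whose span is at most s. If C contains three consecutive cells (x,y), (x+1,y), (x+2,y) of one row, then C also contains both cells (x+1,y+1) and (x+1,y-1); symmetrically, if C contains three consecutive cells (x,y), (x,y+1), (x,y+2) of one column, then C also contains both cells (x+1,y+1) and (x-1,y+1). -/

import Mathlib

/-- Manhattan distance between two cells of the integer grid. -/
def mdist (p q : ℤ × ℤ) : ℕ := (p.1 - q.1).natAbs + (p.2 - q.2).natAbs

/-- The disc of radius `r` centered at `c`: all cells at Manhattan distance at most `r`. -/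
noncomputable def disc (r : ℕ) (c : ℤ × ℤ) : Finset (ℤ × ℤ) :=
  (Finset.Icc (c.1 - r, c.2 - r) (c.1 + r, c.2 + r)).filter (fun p => mdist p c ≤ r)

/-- The span of a finite set of cells: the maximum Manhattan distance between two of
its cells (`0` if the set has at most one cell). -/
def span (S : Finset (ℤ × ℤ)) : ℕ := (S ×ˢ S).sup fun pq => mdist pq.1 pq.2

lemma mdist_le_span {C : Finset (ℤ × ℤ)} {q r : ℤ × ℤ} (hq : q ∈ C) (hr : r ∈ C) :
    mdist q r ≤ span C :=
  Finset.le_sup (f := fun pq => mdist pq.1 pq.2)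
    (by simp [Finset.mem_product, hq, hr] : (q, r) ∈ C ×ˢ C)

lemma span_insert_le {s : ℕ} {C : Finset (ℤ × ℤ)} (hC : span C ≤ s) {p : ℤ × ℤ}
    (hp : ∀ q ∈ C, mdist p q ≤ s) : span (insert p C) ≤ s := by
  apply Finset.sup_le
  rintro ⟨a, b⟩ hab
  simp only [Finset.mem_product, Finset.mem_insert] at hab
  obtain ⟨(rfl | ha), (rfl | hb)⟩ := hab
  · simp [mdist]
  · exact hp b hb
  · have := hp a (by assumption)
    simp only [mdist] at this ⊢
    omega
  · exact le_trans (mdist_le_span ha hb) hC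

lemma mem_of_between {s : ℕ} {C : Finset (ℤ × ℤ)} (hC : span C ≤ s)
    (hmax : ∀ S : Finset (ℤ × ℤ), span S ≤ s → S.card ≤ C.card)
    {p u v : ℤ × ℤ} (hu : u ∈ C) (hv : v ∈ C)
    (hd : ∀ q : ℤ × ℤ, mdist p q ≤ max (mdist u q) (mdist v q)) : p ∈ C := by
  by_contra hp
  have hspan : span (insert p C) ≤ s := by
    apply span_insert_le hC
    intro q hq
    exact le_trans (hd q) (max_le (le_trans (mdist_le_span hu hq) hC)
      (le_trans (mdist_le_span hv hq) hC))
  have := hmax _ hspan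
  rw [Finset.card_insert_of_notMem hp] at this
  omega

/-- In a maximum-cardinality finite set of cells of span at most `s`, three consecutive
cells of a row force the two cells above and below the middle cell to be present, and
symmetrically for columns. -/
theorem max_card_three_consecutive (s : ℕ) (C : Finset (ℤ × ℤ))
    (hC : span C ≤ s)
    (hmax : ∀ S : Finset (ℤ × ℤ), span S ≤ s → S.card ≤ C.card) :
    (∀ x y : ℤ, (x, y) ∈ C → (x + 1, y) ∈ C → (x + 2, y) ∈ C →
      (x + 1, y + 1) ∈ C ∧ (x + 1, y - 1) ∈ C) ∧
    (∀ x y : ℤ, (x, y) ∈ C → (x, y + 1) ∈ C → (x, y + 2) ∈ C →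
      (x + 1, y + 1) ∈ C ∧ (x - 1, y + 1) ∈ C) := by
  constructor
  · intro x y h0 h1 h2
    constructor
    · exact mem_of_between hC hmax h0 h2 (fun q => by unfold mdist; simp; omega)
    · exact mem_of_between hC hmax h0 h2 (fun q => by unfold mdist; simp; omega)
  · intro x y h0 h1 h2
    constructor
    · exact mem_of_between hC hmax h0 h2 (fun q => by unfold mdist; simp; omega)
    · exact mem_of_between hC hmax h0 h2 (fun q => by unfold mdist; simp; omega)
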